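/- Converse Theorem: For every γ ∈ (0, 1/4] there exist a constant c₂ > 0 and an integer N such that for all n ≥ N the following holds. Let 0 < q < p < 1, let K, m, n₂ satisfy m ≥ 2, K ≥ γn, n₂ ≥ γn and mK + n₂ = n, and let 𝓕 be the family of all cluster matrices of partitions of an (mK)-element subset of {1,…,n} into m clusters of size exactly K. For Y* ∈ 𝓕, let A be the random symmetric 0/1 matrix with a_{ii} = 1 and independent entries a_{ij} (i < j) that are Bernoulli(p) if y*_{ij} = 1 and Bernoulli(q) otherwise. If there exists a measurable estimator Ŷ mapping symmetric 0/1 matrices to matrices such that P[Ŷ(A) = Y*] ≥ 3/4 for every Y* ∈ 𝓕, then (p − q)/√(p(1−q)) ≥ c₂/√n. -/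

import Mathlib

open MeasureTheory


/-- Index set of unordered pairs `i < j`. -/
abbrev GraphPairs (n : ℕ) := {e : Fin n × Fin n // e.1 < e.2}

/-- Bernoulli measure on `Bool` with success probability `p`. -/
noncomputable def bernoulliMeasure (p : ℝ) : Measure Bool :=
  (Real.toNNReal p) • Measure.dirac true + (Real.toNNReal (1 - p)) • Measure.dirac false

instance (p : ℝ) : IsFiniteMeasure (bernoulliMeasure p) := by unfold bernoulliMeasure; infer_instance

/-- Product of Bernoulli measures over the pairs `i < j`. -/
noncomputable def graphMeasure {n : ℕ} (θ : GraphPairs n → ℝ) :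
    Measure (GraphPairs n → Bool) :=
  Measure.pi fun e => bernoulliMeasure (θ e)

/-- Symmetric 0/1 adjacency matrix (diagonal 1) built from the edge indicators. -/
noncomputable def adjacency {n : ℕ} (ω : GraphPairs n → Bool) :
    Matrix (Fin n) (Fin n) ℝ := fun i j =>
  if h : i < j then (if ω ⟨(i, j), h⟩ then 1 else 0)
  else if h' : j < i then (if ω ⟨(j, i), h'⟩ then 1 else 0)
  else 1

/-- Nodes `i` and `j` are in the same cluster. -/
def SameCluster {n r : ℕ} (part : Fin n → Option (Fin r)) (i j : Fin n) : Prop :=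
  part i ≠ none ∧ part i = part j

instance {n r : ℕ} (part : Fin n → Option (Fin r)) (i j : Fin n) :
    Decidable (SameCluster part i j) := by unfold SameCluster; infer_instance

/-- Cluster matrix of the partition `part` (`none` = outlier). -/
noncomputable def clusterMatrix {n r : ℕ} (part : Fin n → Option (Fin r)) :
    Matrix (Fin n) (Fin n) ℝ := fun i j =>
  if SameCluster part i j then 1 else 0

/-- Measurable structure on matrices: the Borel product σ-algebra. -/
instance {n : ℕ} : MeasurableSpace (Matrix (Fin n) (Fin n) ℝ) := by
  unfold Matrix; infer_instance


lemma div_eq_iff' {K i c : ℕ} (hK : 0 < K) : i / K = c ↔ c * K ≤ i ∧ i < c * K + K := by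
  have h1 := Nat.le_div_iff_mul_le (k := K) (x := c) (y := i) hK
  have h2 := Nat.div_lt_iff_lt_mul (k := K) (x := i) (y := c + 1) hK
  have hmul : (c + 1) * K = c * K + K := by ring
  constructor
  · rintro rfl
    exact ⟨h1.mp le_rfl, by rw [← hmul]; exact h2.mp (Nat.lt_succ_self _)⟩
  · rintro ⟨hlo, hhi⟩
    have ha := h1.mpr hlo
    have hb := h2.mpr (by rw [hmul]; exact hhi)
    omega

/-- The standard partition: node `i` is in cluster `i / K` if `i < m*K`, outlier otherwise. -/
def stdPart (n m K : ℕ) (hK : 0 < K) : Fin n → Option (Fin m) := fun i =>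
  if h : (i : ℕ) < m * K then some ⟨(i : ℕ) / K, (Nat.div_lt_iff_lt_mul hK).mpr h⟩ else none

lemma stdPart_eq_some_iff {n m K : ℕ} (hK : 0 < K) (hmn : m * K ≤ n) (i : Fin n) (c : Fin m) :
    stdPart n m K hK i = some c ↔ (c : ℕ) * K ≤ (i : ℕ) ∧ (i : ℕ) < (c : ℕ) * K + K := by
  have hcK : (c : ℕ) * K + K ≤ m * K := by
    have : (c : ℕ) + 1 ≤ m := c.2
    calc (c : ℕ) * K + K = ((c : ℕ) + 1) * K := by ring
      _ ≤ m * K := Nat.mul_le_mul_right K this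
  unfold stdPart
  split
  · next h =>
    simp only [Option.some.injEq, Fin.ext_iff]
    rw [div_eq_iff' hK]
  · next h =>
    constructor
    · intro h'; cases h'
    · rintro ⟨hlo, hhi⟩
      exact absurd (lt_of_lt_of_le hhi hcK) h
lemma stdPart_count {n m K : ℕ} (hK : 0 < K) (hmn : m * K ≤ n) (c : Fin m) :
    (Finset.univ.filter fun i : Fin n => stdPart n m K hK i = some c).card = K := by
  have hcK : (c : ℕ) * K + K ≤ m * K := by
    have : (c : ℕ) + 1 ≤ m := c.2
    calc (c : ℕ) * K + K = ((c : ℕ) + 1) * K := by ring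
      _ ≤ m * K := Nat.mul_le_mul_right K this
  have hcard : (Finset.univ.filter fun i : Fin n => stdPart n m K hK i = some c).card
      = (Finset.Ico ((c : ℕ) * K) ((c : ℕ) * K + K)).card := by
    refine Finset.card_bij (fun i _ => (i : ℕ)) ?_ ?_ ?_
    · intro i hi
      rw [Finset.mem_filter] at hi
      rw [Finset.mem_Ico]
      exact (stdPart_eq_some_iff hK hmn i c).mp hi.2
    · intro i _ j _ hij
      exact Fin.ext hij
    · intro j hj
      rw [Finset.mem_Ico] at hj
      refine ⟨⟨j, by omega⟩, ?_, rfl⟩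
      rw [Finset.mem_filter]
      exact ⟨Finset.mem_univ _, (stdPart_eq_some_iff hK hmn _ c).mpr hj⟩
  rw [hcard, Nat.card_Ico]
  omega

lemma swap_count {n m K : ℕ} (σ : Fin n → Option (Fin m)) (u v : Fin n)
    (hσ : ∀ c : Fin m, (Finset.univ.filter fun i => σ i = some c).card = K) (c : Fin m) :
    (Finset.univ.filter fun i => σ (Equiv.swap u v i) = some c).card = K := by
  rw [← hσ c]
  refine Finset.card_bij (fun i _ => Equiv.swap u v i) ?_ ?_ ?_
  · intro i hi
    rw [Finset.mem_filter] at hi ⊢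
    exact ⟨Finset.mem_univ _, hi.2⟩
  · intro i _ j _ hij
    exact (Equiv.swap u v).injective hij
  · intro j hj
    rw [Finset.mem_filter] at hj
    refine ⟨Equiv.swap u v j, ?_, by simp⟩
    rw [Finset.mem_filter]
    simpa using hj.2



lemma hellinger_edge {p q : ℝ} (hq : 0 < q) (hqp : q < p) (hp : p < 1) :
    1 - (p - q)^2 / (p * (1 - q)) ≤ Real.sqrt (p * q) + Real.sqrt ((1 - p) * (1 - q)) := by
  have hp0 : 0 < p := lt_trans hq hqp
  have h1q : 0 < 1 - q := by linarith
  have h1p : 0 < 1 - p := by linarith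
  set sp := Real.sqrt p with hsp_def
  set sq := Real.sqrt q with hsq_def
  set s1p := Real.sqrt (1 - p) with hs1p_def
  set s1q := Real.sqrt (1 - q) with hs1q_def
  have hsp2 : sp^2 = p := Real.sq_sqrt hp0.le
  have hsq2 : sq^2 = q := Real.sq_sqrt hq.le
  have hs1p2 : s1p^2 = 1 - p := Real.sq_sqrt h1p.le
  have hs1q2 : s1q^2 = 1 - q := Real.sq_sqrt h1q.le
  have hsp0 : 0 ≤ sp := Real.sqrt_nonneg _
  have hsq0 : 0 ≤ sq := Real.sqrt_nonneg _
  have hs1p0 : 0 ≤ s1p := Real.sqrt_nonneg _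
  have hs1q0 : 0 ≤ s1q := Real.sqrt_nonneg _
  have hmul1 : Real.sqrt (p * q) = sp * sq := Real.sqrt_mul hp0.le q
  have hmul2 : Real.sqrt ((1 - p) * (1 - q)) = s1p * s1q := Real.sqrt_mul h1p.le _
  rw [hmul1, hmul2]
  have hA1 : (sp - sq)^2 * p ≤ (p - q)^2 := by
    nlinarith [sq_nonneg (sp - sq), mul_nonneg hsp0 hsq0, sq_nonneg (sp + sq),
      mul_nonneg (mul_nonneg hsp0 hsq0) (sq_nonneg (sp - sq))]
  have hA2 : (s1q - s1p)^2 * (1 - q) ≤ (p - q)^2 := by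
    nlinarith [sq_nonneg (s1q - s1p), mul_nonneg hs1p0 hs1q0,
      mul_nonneg (mul_nonneg hs1p0 hs1q0) (sq_nonneg (s1q - s1p))]
  have hD : 0 < p * (1 - q) := mul_pos hp0 h1q
  rw [sub_le_iff_le_add, ← sub_le_iff_le_add', le_div_iff₀ hD]
  nlinarith [hA1, hA2, sq_nonneg (sp - sq), sq_nonneg (s1q - s1p), sq_nonneg (p - q)]

lemma affinity_self {r : ℝ} (h0 : 0 ≤ r) (h1 : r ≤ 1) :
    Real.sqrt (r * r) + Real.sqrt ((1 - r) * (1 - r)) = 1 := by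
  rw [Real.sqrt_mul_self h0, Real.sqrt_mul_self (by linarith)]
  ring

lemma affinity_le_one {x y : ℝ} (hx0 : 0 ≤ x) (hx1 : x ≤ 1) (hy0 : 0 ≤ y) (hy1 : y ≤ 1) :
    Real.sqrt (x * y) + Real.sqrt ((1 - x) * (1 - y)) ≤ 1 := by
  have h1 : Real.sqrt (x * y) ≤ (x + y) / 2 := by
    nlinarith [Real.sqrt_nonneg (x*y), sq_nonneg (Real.sqrt x - Real.sqrt y),
      Real.sqrt_mul hx0 y, Real.sq_sqrt hx0, Real.sq_sqrt hy0,
      Real.sqrt_nonneg x, Real.sqrt_nonneg y]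
  have h2 : Real.sqrt ((1 - x) * (1 - y)) ≤ ((1 - x) + (1 - y)) / 2 := by
    nlinarith [Real.sqrt_nonneg ((1-x)*(1-y)),
      sq_nonneg (Real.sqrt (1-x) - Real.sqrt (1-y)),
      Real.sqrt_mul (by linarith : (0:ℝ) ≤ 1 - x) (1-y),
      Real.sq_sqrt (by linarith : (0:ℝ) ≤ 1 - x),
      Real.sq_sqrt (by linarith : (0:ℝ) ≤ 1 - y),
      Real.sqrt_nonneg (1-x), Real.sqrt_nonneg (1-y)]
  linarith


/-- weight of one coordinate -/
def edgeW (r : ℝ) (b : Bool) : ℝ := if b then r else 1 - r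

lemma bernoulli_singleton (r : ℝ) (b : Bool) :
    bernoulliMeasure r {b} = ENNReal.ofReal (edgeW r b) := by
  cases b <;>
    · simp [bernoulliMeasure, Measure.dirac_apply, edgeW, ENNReal.ofReal]

lemma measurableSet_all {n : ℕ} (S : Set (GraphPairs n → Bool)) : MeasurableSet S := by
  have hsing : ∀ ω : GraphPairs n → Bool, MeasurableSet ({ω} : Set (GraphPairs n → Bool)) := by
    intro ω
    have : ({ω} : Set (GraphPairs n → Bool)) = ⋂ e, (fun f => f e) ⁻¹' {ω e} := by
      ext f; simp [funext_iff]
    rw [this]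
    exact MeasurableSet.iInter fun e =>
      (measurable_pi_apply e) (measurableSet_singleton (ω e))
  have : S = ⋃ ω ∈ S, ({ω} : Set (GraphPairs n → Bool)) := by simp
  rw [this]
  exact MeasurableSet.biUnion (Set.to_countable S) fun ω _ => hsing ω

lemma graphMeasure_singleton {n : ℕ} (θ : GraphPairs n → ℝ) (h0 : ∀ e, 0 ≤ θ e)
    (h1 : ∀ e, θ e ≤ 1) (ω : GraphPairs n → Bool) :
    graphMeasure θ {ω} = ENNReal.ofReal (∏ e, edgeW (θ e) (ω e)) := by
  rw [← Set.univ_pi_singleton ω, graphMeasure, Measure.pi_pi]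
  rw [ENNReal.ofReal_prod_of_nonneg]
  · exact Finset.prod_congr rfl fun e _ => bernoulli_singleton (θ e) (ω e)
  · intro e _
    cases hω : ω e <;> simp [edgeW] <;> [linarith [h1 e]; exact h0 e]

lemma graphMeasure_apply {n : ℕ} (θ : GraphPairs n → ℝ) (h0 : ∀ e, 0 ≤ θ e)
    (h1 : ∀ e, θ e ≤ 1) (F : Finset (GraphPairs n → Bool)) :
    graphMeasure θ ↑F = ENNReal.ofReal (∑ ω ∈ F, ∏ e, edgeW (θ e) (ω e)) := by
  have hF : (↑F : Set (GraphPairs n → Bool)) = ⋃ ω ∈ F, {ω} := by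
    ext x; simp
  rw [hF, measure_biUnion_finset, ENNReal.ofReal_sum_of_nonneg]
  · exact Finset.sum_congr rfl fun ω _ => graphMeasure_singleton θ h0 h1 ω
  · intro ω _
    exact Finset.prod_nonneg fun e _ => by
      cases hω : ω e <;> simp [edgeW] <;> [linarith [h1 e]; exact h0 e]
  · intro ω _ ω' _ hne
    simp [Function.onFun, Set.disjoint_singleton, hne]
  · exact fun b _ => measurableSet_all _


lemma edgeW_nonneg {r : ℝ} (h0 : 0 ≤ r) (h1 : r ≤ 1) (b : Bool) : 0 ≤ edgeW r b := by
  cases b <;> simp [edgeW] <;> linarith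

lemma sqrt_prod {ι : Type*} (s : Finset ι) (f : ι → ℝ) (h : ∀ i ∈ s, 0 ≤ f i) :
    Real.sqrt (∏ i ∈ s, f i) = ∏ i ∈ s, Real.sqrt (f i) := by
  induction s using Finset.cons_induction with
  | empty => simp
  | cons a s ha ih =>
    rw [Finset.prod_cons, Finset.prod_cons,
      Real.sqrt_mul (h a (Finset.mem_cons_self a s)),
      ih fun i hi => h i (Finset.mem_cons_of_mem hi)]

lemma sum_prod_pi {ι : Type*} [Fintype ι] [DecidableEq ι] (f : ι → Bool → ℝ) :
    ∑ ω : ι → Bool, ∏ i, f i (ω i) = ∏ i, (f i true + f i false) := by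
  have h := Finset.prod_univ_sum (fun _ : ι => (Finset.univ : Finset Bool)) f
  rw [Fintype.piFinset_univ] at h
  rw [← h]
  exact Finset.prod_congr rfl fun i _ => by simp [Fintype.sum_bool]

lemma affinity_bound {ι : Type*} [Fintype ι] [DecidableEq ι] (θ θ' : ι → ℝ)
    (h0 : ∀ i, 0 ≤ θ i) (h1 : ∀ i, θ i ≤ 1)
    (h0' : ∀ i, 0 ≤ θ' i) (h1' : ∀ i, θ' i ≤ 1)
    (S₁ S₂ : Finset (ι → Bool)) (hd : Disjoint S₁ S₂)
    (hA : 3/4 ≤ ∑ ω ∈ S₁, ∏ i, edgeW (θ i) (ω i))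
    (hB : 3/4 ≤ ∑ ω ∈ S₂, ∏ i, edgeW (θ' i) (ω i)) :
    (∏ i, (Real.sqrt (θ i * θ' i) + Real.sqrt ((1 - θ i) * (1 - θ' i))))^2 ≤ 3/4 := by
  classical
  set a : (ι → Bool) → ℝ := fun ω => ∏ i, edgeW (θ i) (ω i) with ha_def
  set b : (ι → Bool) → ℝ := fun ω => ∏ i, edgeW (θ' i) (ω i) with hb_def
  have ha0 : ∀ ω, 0 ≤ a ω := fun ω =>
    Finset.prod_nonneg fun i _ => edgeW_nonneg (h0 i) (h1 i) _
  have hb0 : ∀ ω, 0 ≤ b ω := fun ω =>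
    Finset.prod_nonneg fun i _ => edgeW_nonneg (h0' i) (h1' i) _
  have hsa : ∑ ω : ι → Bool, a ω = 1 := by
    rw [ha_def, sum_prod_pi]
    simp [edgeW]
  have hsb : ∑ ω : ι → Bool, b ω = 1 := by
    rw [hb_def, sum_prod_pi]
    simp [edgeW]
  set A : ℝ := ∏ i, (Real.sqrt (θ i * θ' i) + Real.sqrt ((1 - θ i) * (1 - θ' i))) with hA_def
  have hAsum : ∑ ω : ι → Bool, Real.sqrt (a ω) * Real.sqrt (b ω) = A := by
    have : ∀ ω : ι → Bool, Real.sqrt (a ω) * Real.sqrt (b ω)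
        = ∏ i, Real.sqrt (edgeW (θ i) (ω i) * edgeW (θ' i) (ω i)) := by
      intro ω
      rw [← Real.sqrt_mul (ha0 ω), ha_def, hb_def, ← Finset.prod_mul_distrib,
        sqrt_prod _ _ (fun i _ => mul_nonneg (edgeW_nonneg (h0 i) (h1 i) _)
          (edgeW_nonneg (h0' i) (h1' i) _))]
    rw [Finset.sum_congr rfl fun ω _ => this ω,
      sum_prod_pi (fun i b => Real.sqrt (edgeW (θ i) b * edgeW (θ' i) b))]
    exact Finset.prod_congr rfl fun i _ => by simp [edgeW]
  -- sums of squared sqrt differences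
  have hsq : ∀ ω, Real.sqrt (a ω) ^ 2 = a ω := fun ω => Real.sq_sqrt (ha0 ω)
  have hsq' : ∀ ω, Real.sqrt (b ω) ^ 2 = b ω := fun ω => Real.sq_sqrt (hb0 ω)
  have hminus : ∑ ω : ι → Bool, (Real.sqrt (a ω) - Real.sqrt (b ω))^2 = 2 - 2*A := by
    have : ∀ ω : ι → Bool, (Real.sqrt (a ω) - Real.sqrt (b ω))^2
        = a ω + b ω - 2*(Real.sqrt (a ω) * Real.sqrt (b ω)) := by
      intro ω; rw [sub_sq, hsq, hsq']; ring
    rw [Finset.sum_congr rfl fun ω _ => this ω]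
    rw [Finset.sum_sub_distrib, Finset.sum_add_distrib, ← Finset.mul_sum, hAsum, hsa, hsb]
    ring
  have hplus : ∑ ω : ι → Bool, (Real.sqrt (a ω) + Real.sqrt (b ω))^2 = 2 + 2*A := by
    have : ∀ ω : ι → Bool, (Real.sqrt (a ω) + Real.sqrt (b ω))^2
        = a ω + b ω + 2*(Real.sqrt (a ω) * Real.sqrt (b ω)) := by
      intro ω; rw [add_sq, hsq, hsq']; ring
    rw [Finset.sum_congr rfl fun ω _ => this ω]
    rw [Finset.sum_add_distrib, Finset.sum_add_distrib, ← Finset.mul_sum, hAsum, hsa, hsb]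
    ring
  -- Cauchy-Schwarz
  have hCS : (∑ ω : ι → Bool, |a ω - b ω|)^2 ≤ (2 - 2*A)*(2 + 2*A) := by
    have habs : ∀ ω : ι → Bool, |a ω - b ω|
        = |Real.sqrt (a ω) - Real.sqrt (b ω)| * (Real.sqrt (a ω) + Real.sqrt (b ω)) := by
      intro ω
      rw [← abs_of_nonneg (by positivity : (0:ℝ) ≤ Real.sqrt (a ω) + Real.sqrt (b ω)),
        ← abs_mul]
      congr 1
      have := hsq ω; have := hsq' ω; nlinarith [hsq ω, hsq' ω]
    rw [Finset.sum_congr rfl fun ω _ => habs ω]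
    calc (∑ ω : ι → Bool, |Real.sqrt (a ω) - Real.sqrt (b ω)| * (Real.sqrt (a ω) + Real.sqrt (b ω)))^2
        ≤ (∑ ω : ι → Bool, |Real.sqrt (a ω) - Real.sqrt (b ω)|^2)
          * (∑ ω : ι → Bool, (Real.sqrt (a ω) + Real.sqrt (b ω))^2) :=
          Finset.sum_mul_sq_le_sq_mul_sq _ _ _
      _ = (2 - 2*A)*(2 + 2*A) := by
          rw [hplus, ← hminus]
          congr 1
          exact Finset.sum_congr rfl fun ω _ => by rw [sq_abs]
  -- gap
  have hS1b : ∑ ω ∈ S₁, b ω ≤ 1/4 := by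
    have hsub : S₁ ⊆ Finset.univ \ S₂ := fun x hx =>
      Finset.mem_sdiff.2 ⟨Finset.mem_univ x, fun hx2 => (Finset.disjoint_left.1 hd hx hx2)⟩
    calc ∑ ω ∈ S₁, b ω ≤ ∑ ω ∈ Finset.univ \ S₂, b ω :=
          Finset.sum_le_sum_of_subset_of_nonneg hsub fun ω _ _ => hb0 ω
      _ = (∑ ω : ι → Bool, b ω) - ∑ ω ∈ S₂, b ω :=
          Finset.sum_sdiff_eq_sub (Finset.subset_univ S₂)
      _ ≤ 1/4 := by rw [hsb]; linarith
  have hgap : 1/2 ≤ ∑ ω ∈ S₁, (a ω - b ω) := by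
    rw [Finset.sum_sub_distrib]; linarith
  have h2gap : 2 * (∑ ω ∈ S₁, (a ω - b ω)) ≤ ∑ ω : ι → Bool, |a ω - b ω| := by
    have htot : ∑ ω : ι → Bool, (a ω - b ω) = 0 := by
      rw [Finset.sum_sub_distrib, hsa, hsb]; ring
    have hsplit : ∑ ω ∈ Finset.univ \ S₁, (a ω - b ω)
        = - ∑ ω ∈ S₁, (a ω - b ω) := by
      rw [Finset.sum_sdiff_eq_sub (Finset.subset_univ S₁), htot]; ring
    have h1 : ∑ ω ∈ S₁, (a ω - b ω) ≤ ∑ ω ∈ S₁, |a ω - b ω| :=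
      Finset.sum_le_sum fun ω _ => le_abs_self _
    have h2 : - ∑ ω ∈ Finset.univ \ S₁, (a ω - b ω)
        ≤ ∑ ω ∈ Finset.univ \ S₁, |a ω - b ω| := by
      rw [← Finset.sum_neg_distrib]
      exact Finset.sum_le_sum fun ω _ => neg_le_abs _
    have h3 : ∑ ω ∈ Finset.univ \ S₁, |a ω - b ω| + ∑ ω ∈ S₁, |a ω - b ω|
        = ∑ ω : ι → Bool, |a ω - b ω| :=
      Finset.sum_sdiff (Finset.subset_univ S₁)
    rw [hsplit] at h2
    linarith
  have h1le : 1 ≤ ∑ ω : ι → Bool, |a ω - b ω| := by linarith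
  nlinarith [h1le, hCS, Finset.sum_nonneg (fun ω (_ : ω ∈ Finset.univ) => abs_nonneg (a ω - b ω))]


set_option maxHeartbeats 2000000 in
/-- **Converse Theorem.** For every `γ ∈ (0, 1/4]` there are `c₂ > 0` and `N` such that for
`n ≥ N`, clusters of equal size `K ≥ γn`, `n₂ ≥ γn` outliers and `mK + n₂ = n`: if some
measurable estimator recovers every cluster matrix of `m` clusters of size exactly `K` with
probability at least `3/4`, then `(p − q)/√(p(1−q)) ≥ c₂/√n`. -/
theorem converse_theorem (γ : ℝ) (hγ0 : 0 < γ) (hγ1 : γ ≤ 1 / 4) :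
    ∃ c₂ : ℝ, 0 < c₂ ∧ ∃ N : ℕ, ∀ n : ℕ, N ≤ n →
      ∀ p q : ℝ, 0 < q → q < p → p < 1 →
      ∀ m K n₂ : ℕ, 2 ≤ m → γ * n ≤ K → γ * n ≤ n₂ → m * K + n₂ = n →
      ∀ Yhat : Matrix (Fin n) (Fin n) ℝ → Matrix (Fin n) (Fin n) ℝ,
        Measurable Yhat →
        (∀ σ : Fin n → Option (Fin m),
          (∀ c : Fin m, (Finset.univ.filter fun i => σ i = some c).card = K) →
          graphMeasure (fun e : GraphPairs n =>
              if SameCluster σ e.1.1 e.1.2 then p else q)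
            {ω | Yhat (adjacency ω) = clusterMatrix σ} ≥ ENNReal.ofReal (3 / 4)) →
        (p - q) / Real.sqrt (p * (1 - q)) ≥ c₂ / Real.sqrt n := by
  classical
  refine ⟨1/8, by norm_num, ⌈γ⁻¹⌉₊, ?_⟩
  intro n hn p q hq hqp hp m K n₂ hm hKγ hn2γ hsum Yhat _ hrec
  have hp0 : 0 < p := lt_trans hq hqp
  have h1q : 0 < 1 - q := by linarith
  have hγn : (1:ℝ) ≤ γ * n := by
    have h1 : γ⁻¹ ≤ (⌈γ⁻¹⌉₊ : ℝ) := Nat.le_ceil _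
    have h2 : ((⌈γ⁻¹⌉₊ : ℕ) : ℝ) ≤ (n : ℝ) := Nat.cast_le.mpr hn
    calc (1:ℝ) = γ * γ⁻¹ := (mul_inv_cancel₀ (ne_of_gt hγ0)).symm
      _ ≤ γ * n := by nlinarith
  have hK1 : 1 ≤ K := by
    have : (1:ℝ) ≤ (K:ℝ) := le_trans hγn hKγ
    exact_mod_cast this
  have hn21 : 1 ≤ n₂ := by
    have : (1:ℝ) ≤ (n₂:ℝ) := le_trans hγn hn2γ
    exact_mod_cast this
  have hK0 : 0 < K := hK1
  have hmK0 : 0 < m * K := Nat.mul_pos (by omega) hK0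
  have hmKn : m * K < n := by omega
  have hn1 : 1 ≤ n := by omega
  have hn0 : (0:ℝ) < n := by exact_mod_cast hn1
  set σ : Fin n → Option (Fin m) := stdPart n m K hK0 with hσdef
  have huval : ((⟨0, by omega⟩ : Fin n) : ℕ) = 0 := rfl
  set u : Fin n := ⟨0, by omega⟩ with hudef
  set v : Fin n := ⟨m * K, hmKn⟩ with hvdef
  set σ' : Fin n → Option (Fin m) := fun i => σ (Equiv.swap u v i) with hσ'def
  have hσc : ∀ c : Fin m, (Finset.univ.filter fun i => σ i = some c).card = K :=
    stdPart_count hK0 (le_of_lt hmKn)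
  have hσ'c : ∀ c : Fin m, (Finset.univ.filter fun i => σ' i = some c).card = K :=
    swap_count σ u v hσc
  have h1 := hrec σ hσc
  have h2 := hrec σ' hσ'c
  set θ : GraphPairs n → ℝ := fun e => if SameCluster σ e.1.1 e.1.2 then p else q with hθdef
  set θ' : GraphPairs n → ℝ := fun e => if SameCluster σ' e.1.1 e.1.2 then p else q with hθ'def
  have hθ0 : ∀ e, 0 ≤ θ e := fun e => by rw [hθdef]; dsimp only; split <;> linarith
  have hθ1 : ∀ e, θ e ≤ 1 := fun e => by rw [hθdef]; dsimp only; split <;> linarith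
  have hθ'0 : ∀ e, 0 ≤ θ' e := fun e => by rw [hθ'def]; dsimp only; split <;> linarith
  have hθ'1 : ∀ e, θ' e ≤ 1 := fun e => by rw [hθ'def]; dsimp only; split <;> linarith
  set S₁ : Finset (GraphPairs n → Bool) :=
    Finset.univ.filter (fun ω => Yhat (adjacency ω) = clusterMatrix σ) with hS₁def
  set S₂ : Finset (GraphPairs n → Bool) :=
    Finset.univ.filter (fun ω => Yhat (adjacency ω) = clusterMatrix σ') with hS₂def
  have hS₁set : {ω | Yhat (adjacency ω) = clusterMatrix σ} = (↑S₁ : Set _) := by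
    ext ω; simp [hS₁def]
  have hS₂set : {ω | Yhat (adjacency ω) = clusterMatrix σ'} = (↑S₂ : Set _) := by
    ext ω; simp [hS₂def]
  rw [hS₁set, graphMeasure_apply θ hθ0 hθ1] at h1
  rw [hS₂set, graphMeasure_apply θ' hθ'0 hθ'1] at h2
  have h34a : 3/4 ≤ ∑ ω ∈ S₁, ∏ e, edgeW (θ e) (ω e) := by
    have := (ENNReal.ofReal_le_ofReal_iff (Finset.sum_nonneg fun ω _ =>
      Finset.prod_nonneg fun e _ => edgeW_nonneg (hθ0 e) (hθ1 e) _)).mp h1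
    linarith
  have h34b : 3/4 ≤ ∑ ω ∈ S₂, ∏ e, edgeW (θ' e) (ω e) := by
    have := (ENNReal.ofReal_le_ofReal_iff (Finset.sum_nonneg fun ω _ =>
      Finset.prod_nonneg fun e _ => edgeW_nonneg (hθ'0 e) (hθ'1 e) _)).mp h2
    linarith
  -- disjointness
  have hσune : σ u ≠ none := by
    rw [hσdef]
    unfold stdPart
    rw [dif_pos (by simpa [hudef] using hmK0)]
    simp
  have hσv : σ v = none := by
    rw [hσdef]
    unfold stdPart
    rw [dif_neg (by simp [hvdef])]
  have hcm1 : clusterMatrix σ u u = 1 := by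
    unfold clusterMatrix
    rw [if_pos ⟨hσune, rfl⟩]
  have hcm2 : clusterMatrix σ' u u = 0 := by
    unfold clusterMatrix
    rw [if_neg]
    intro hsc
    apply hsc.1
    rw [hσ'def]
    dsimp only
    rw [Equiv.swap_apply_left]
    exact hσv
  have hd : Disjoint S₁ S₂ := by
    rw [Finset.disjoint_left]
    intro ω hω1 hω2
    rw [hS₁def, Finset.mem_filter] at hω1
    rw [hS₂def, Finset.mem_filter] at hω2
    have heq : clusterMatrix σ = clusterMatrix σ' := hω1.2.symm.trans hω2.2
    have := congrFun (congrFun heq u) u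
    rw [hcm1, hcm2] at this
    norm_num at this
  have hkey := affinity_bound θ θ' hθ0 hθ1 hθ'0 hθ'1 S₁ S₂ hd h34a h34b
  -- contradiction setup
  by_contra hcon
  push_neg at hcon
  set δ : ℝ := (p - q)^2 / (p * (1 - q)) with hδdef
  have hδpos : 0 < δ := div_pos (pow_pos (sub_pos.mpr hqp) 2) (mul_pos hp0 h1q)
  have hδsmall : δ < (1/8)^2 / n := by
    have hsq : ((p - q)/Real.sqrt (p*(1-q)))^2 < ((1/8:ℝ)/Real.sqrt n)^2 := by
      apply pow_lt_pow_left₀ hcon (div_nonneg (by linarith) (Real.sqrt_nonneg _)) (by norm_num)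
    rw [div_pow, div_pow, Real.sq_sqrt (mul_pos hp0 h1q).le,
      Real.sq_sqrt (le_of_lt hn0)] at hsq
    exact hsq
  -- the differing-edge set
  set D : Finset (GraphPairs n) := Finset.univ.filter (fun e => ¬ (θ e = θ' e)) with hDdef
  have hmemD : ∀ e ∈ D, e.1.1 = u ∨ e.1.1 = v ∨ e.1.2 = u ∨ e.1.2 = v := by
    intro e he
    by_contra hc4
    push_neg at hc4
    obtain ⟨hc1, hc2, hc3, hc5⟩ := hc4
    have hi : σ' e.1.1 = σ e.1.1 := by
      rw [hσ'def]; dsimp only; rw [Equiv.swap_apply_of_ne_of_ne hc1 hc2]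
    have hj : σ' e.1.2 = σ e.1.2 := by
      rw [hσ'def]; dsimp only; rw [Equiv.swap_apply_of_ne_of_ne hc3 hc5]
    have hsame : SameCluster σ' e.1.1 e.1.2 ↔ SameCluster σ e.1.1 e.1.2 := by
      unfold SameCluster; rw [hi, hj]
    rw [hDdef, Finset.mem_filter] at he
    apply he.2
    rw [hθdef, hθ'def]
    dsimp only
    by_cases hsc : SameCluster σ e.1.1 e.1.2
    · rw [if_pos hsc, if_pos (hsame.mpr hsc)]
    · rw [if_neg hsc, if_neg (fun h => hsc (hsame.mp h))]
  have hDcard : D.card ≤ 4 * n := by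
    have himg : D.card = (D.image (fun e => e.1)).card :=
      (Finset.card_image_of_injective D Subtype.val_injective).symm
    have hsub : D.image (fun e => e.1) ⊆
        (({u, v} : Finset (Fin n)) ×ˢ Finset.univ) ∪ (Finset.univ ×ˢ ({u, v} : Finset (Fin n))) := by
      intro x hx
      rw [Finset.mem_image] at hx
      obtain ⟨e, he, rfl⟩ := hx
      rcases hmemD e he with h | h | h | h <;>
        simp [Finset.mem_union, Finset.mem_product, h]
    have hcuv : ({u, v} : Finset (Fin n)).card ≤ 2 :=
      le_trans (Finset.card_insert_le u {v}) (by simp)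
    calc D.card = (D.image (fun e => e.1)).card := himg
      _ ≤ _ := Finset.card_le_card hsub
      _ ≤ (({u, v} : Finset (Fin n)) ×ˢ (Finset.univ : Finset (Fin n))).card
          + ((Finset.univ : Finset (Fin n)) ×ˢ ({u, v} : Finset (Fin n))).card :=
        Finset.card_union_le _ _
      _ ≤ 4 * n := by
        rw [Finset.card_product, Finset.card_product, Finset.card_univ, Fintype.card_fin]
        nlinarith [hcuv]
  set g : GraphPairs n → ℝ :=
    fun e => Real.sqrt (θ e * θ' e) + Real.sqrt ((1 - θ e) * (1 - θ' e)) with hgdef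
  have hgD : ∀ e ∈ D, 1 - δ ≤ g e := by
    intro e he
    rw [hDdef, Finset.mem_filter] at he
    have hne := he.2
    rw [hgdef]; dsimp only
    rw [hθdef, hθ'def] at hne ⊢; dsimp only at hne ⊢
    by_cases hs : SameCluster σ e.1.1 e.1.2 <;> by_cases hs' : SameCluster σ' e.1.1 e.1.2
    · exact absurd (by rw [if_pos hs, if_pos hs']) hne
    · rw [if_pos hs, if_neg hs']
      exact hellinger_edge hq hqp hp
    · rw [if_neg hs, if_pos hs']
      rw [mul_comm q p, mul_comm (1-q) (1-p)]
      exact hellinger_edge hq hqp hp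
    · exact absurd (by rw [if_neg hs, if_neg hs']) hne
  have hδ1 : δ ≤ 1 := by
    have h164 : (1/8:ℝ)^2 / n ≤ 1 := by
      rw [div_le_one hn0]
      nlinarith
    linarith
  have hgone : ∀ e ∈ Finset.univ.filter (fun e : GraphPairs n => θ e = θ' e), g e = 1 := by
    intro e he
    rw [Finset.mem_filter] at he
    rw [hgdef]; dsimp only
    rw [← he.2]
    exact affinity_self (hθ0 e) (hθ1 e)
  have hA : (1 - δ)^(D.card) ≤ ∏ e, g e := by
    rw [← Finset.prod_filter_mul_prod_filter_not Finset.univ (fun e => θ e = θ' e) g]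
    rw [Finset.prod_eq_one hgone, one_mul]
    calc (1 - δ)^(D.card) = ∏ _e ∈ D, (1 - δ) := (Finset.prod_const _).symm
      _ ≤ ∏ e ∈ D, g e := Finset.prod_le_prod (fun _ _ => by linarith) hgD
  have hbern : 1 - (D.card : ℝ) * δ ≤ (1 - δ)^(D.card) := by
    have := one_add_mul_le_pow (a := -δ) (by linarith) D.card
    have heq : (1 : ℝ) + (D.card : ℝ) * (-δ) = 1 - (D.card : ℝ) * δ := by ring
    rw [heq] at this
    rw [← sub_eq_add_neg] at this; exact this
  have hcast : (D.card : ℝ) ≤ 4 * n := by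
    have : ((D.card : ℕ) : ℝ) ≤ ((4 * n : ℕ) : ℝ) := Nat.cast_le.mpr hDcard
    simpa using this
  have hAbig : (15:ℝ)/16 ≤ ∏ e, g e := by
    have hlt : 4 * (n:ℝ) * δ < 4 * (n:ℝ) * ((1/8)^2 / n) :=
      mul_lt_mul_of_pos_left hδsmall (by positivity)
    have heqq : 4 * (n:ℝ) * ((1/8)^2 / n) = 1/16 := by
      field_simp
      ring
    have h3 : 1 - 4 * (n:ℝ) * δ ≤ 1 - (D.card : ℝ) * δ := by nlinarith
    calc (15:ℝ)/16 ≤ 1 - 4 * (n:ℝ) * δ := by rw [heqq] at hlt; linarith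
      _ ≤ 1 - (D.card : ℝ) * δ := h3
      _ ≤ (1 - δ)^(D.card) := hbern
      _ ≤ ∏ e, g e := hA
  rw [hgdef] at hAbig
  dsimp only at hAbig
  nlinarith [hkey, hAbig]
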